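/- Let F be an algebraically closed field of characteristic different from 2, and let M be a nonsingular n×n matrix over F. Then there exists a polynomial f ∈ F[x] such that f(M)² = M. -/

import Mathlib

open Polynomial

-- Newton iteration square root lemma
lemma newton_sqrt {R : Type*} [CommRing R] (v : R) (hv : 2 * v = 1) (u : R) (hu : IsUnit u) :
    ∀ k : ℕ, ∀ b : R, IsUnit b → (b ^ 2 - u) ^ (2 ^ k) = 0 → ∃ c, c ^ 2 = u := by
  intro k
  induction k with
  | zero =>
    intro b _ h
    exact ⟨b, by simpa [sub_eq_zero] using h⟩
  | succ k ih =>
    intro b hb h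
    obtain ⟨bi, hbi⟩ := hb.exists_right_inv
    set b' := v * (b + u * bi) with hb'
    have key : b' ^ 2 - u = v ^ 2 * bi ^ 2 * (b ^ 2 - u) ^ 2 := by
      rw [hb']
      linear_combination (u * (2 * v + 1)) * hv +
        (v ^ 2 * (-2 * b ^ 2 - b ^ 2 * (b * bi - 1) + 6 * u + 2 * u * (b * bi - 1))) * hbi
    have hnil : (b' ^ 2 - u) ^ (2 ^ k) = 0 := by
      rw [key, mul_pow, ← pow_mul, mul_comm 2 (2 ^ k), ← pow_succ, h, mul_zero]
    have hb'u : IsUnit b' := by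
      have h1 : IsUnit (b' ^ 2) := by
        have : b' ^ 2 = u + (b' ^ 2 - u) := by ring
        rw [this]
        exact (IsNilpotent.isUnit_add_left_of_commute ⟨2 ^ k, hnil⟩ hu (Commute.all _ _))
      exact (isUnit_pow_iff (two_ne_zero)).mp h1
    exact ih b' hb'u hnil


/-- Over an algebraically closed field of characteristic different from 2, every
nonsingular matrix `M` has a polynomial square root: `f(M)² = M` for some `f ∈ F[x]`. -/
theorem stmt_4 (F : Type*) [Field F] [IsAlgClosed F] (hchar : ringChar F ≠ 2)
    (n : ℕ) (M : Matrix (Fin n) (Fin n) F) (hM : IsUnit M) :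
    ∃ f : Polynomial F, (Polynomial.aeval M f) ^ 2 = M := by
  classical
  set p := M.charpoly with hp
  have hmonic : p.Monic := M.charpoly_monic
  have hsplits : p.Splits := IsAlgClosed.splits p
  have hcard : p.roots.card = p.natDegree := splits_iff_card_roots.mp hsplits
  have hdeg : p.natDegree = n := by
    rw [hp, M.charpoly_natDegree_eq_dim, Fintype.card_fin]
  have hprod : p = (p.roots.map fun a => X - C a).prod := by
    conv_lhs => rw [← C_leadingCoeff_mul_prod_multiset_X_sub_C hcard]
    rw [hmonic.leadingCoeff, map_one, one_mul]
  -- the constant coefficient is nonzero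
  have hdet : IsUnit M.det := M.isUnit_iff_isUnit_det.mp hM
  have hc0 : p.coeff 0 ≠ 0 := by
    intro h
    have := M.det_eq_sign_charpoly_coeff
    rw [← hp, h, mul_zero] at this
    exact hdet.ne_zero this
  -- square root function on F
  let s : F → F := fun a => Classical.choose (IsAlgClosed.exists_pow_nat_eq a zero_lt_two)
  have hs : ∀ a, s a ^ 2 = a := fun a =>
    Classical.choose_spec (IsAlgClosed.exists_pow_nat_eq a zero_lt_two)
  -- interpolating polynomial
  let g : F[X] := Lagrange.interpolate p.roots.toFinset id s
  have hdvd : p ∣ (g ^ 2 - X) ^ n := by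
    rw [hprod, ← hdeg, ← hcard]
    have : ((g ^ 2 - X) : F[X]) ^ Multiset.card p.roots
        = (p.roots.map fun _ => g ^ 2 - X).prod := by
      rw [Multiset.map_const', Multiset.prod_replicate]
    rw [this]
    refine Multiset.prod_dvd_prod_of_dvd _ _ fun a ha => ?_
    refine dvd_iff_isRoot.mpr ?_
    have hga : g.eval a = s a :=
      Lagrange.eval_interpolate_at_node s (Set.injOn_id _)
        (Multiset.mem_toFinset.mpr ha)
    have hroot : p.IsRoot a := isRoot_of_mem_roots ha
    simp only [IsRoot, eval_sub, eval_pow, eval_X, hga, hs a, sub_self]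
  -- work in the quotient ring
  have h2F : (2 : F) ≠ 0 := Ring.two_ne_zero hchar
  set R := AdjoinRoot p with hR
  have hv : (2 : R) * algebraMap F R 2⁻¹ = 1 := by
    rw [show (2 : R) = algebraMap F R 2 from (map_ofNat (algebraMap F R) 2).symm,
      ← map_mul, mul_inv_cancel₀ h2F, map_one]
  -- the root is a unit
  have hXcop : IsCoprime (X : F[X]) p :=
    (Polynomial.irreducible_X.coprime_iff_not_dvd).mpr
      (fun hdvd' => hc0 (Polynomial.X_dvd_iff.mp hdvd'))
  obtain ⟨a, b, hab⟩ := hXcop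
  have hu : IsUnit (AdjoinRoot.root p) := by
    refine IsUnit.of_mul_eq_one (AdjoinRoot.mk p a) ?_
    have := congrArg (AdjoinRoot.mk p) hab
    simpa [mul_comm, AdjoinRoot.mk_X, AdjoinRoot.mk_self] using this
  -- initial approximation
  set b0 : R := AdjoinRoot.mk p g with hb0def
  have hb0sub : b0 ^ 2 - AdjoinRoot.root p = AdjoinRoot.mk p (g ^ 2 - X) := by
    rw [map_sub, map_pow, AdjoinRoot.mk_X]
  have hb0nil : (b0 ^ 2 - AdjoinRoot.root p) ^ (2 ^ n) = 0 := by
    rw [hb0sub, ← map_pow, AdjoinRoot.mk_eq_zero]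
    exact dvd_trans hdvd (pow_dvd_pow _ (Nat.le_of_lt (Nat.lt_two_pow_self (n := n))))
  have hb0 : IsUnit b0 := by
    have h1 : IsUnit (b0 ^ 2) := by
      have : b0 ^ 2 = AdjoinRoot.root p + (b0 ^ 2 - AdjoinRoot.root p) := by ring
      rw [this]
      exact IsNilpotent.isUnit_add_left_of_commute ⟨2 ^ n, hb0nil⟩ hu (Commute.all _ _)
    exact (isUnit_pow_iff two_ne_zero).mp h1
  obtain ⟨c, hc⟩ := newton_sqrt _ hv _ hu n b0 hb0 hb0nil
  obtain ⟨f, rfl⟩ := AdjoinRoot.mk_surjective c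
  have hfd : p ∣ f ^ 2 - X := by
    rw [← AdjoinRoot.mk_eq_zero, map_sub, map_pow, AdjoinRoot.mk_X, hc, sub_self]
  obtain ⟨q, hq⟩ := hfd
  refine ⟨f, ?_⟩
  have := congrArg (aeval M) hq
  rw [map_sub, map_pow, map_mul, aeval_X, hp, Matrix.aeval_self_charpoly,
    zero_mul, sub_eq_zero] at this
  exact this
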